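/- Let V be a finite-dimensional vector space over a field, g a linear automorphism with (g+1)^2 = 0, and k an even positive integer with 0 < k < dim V. Then (Λ^k(g) - 1)^{k+1} = 0. -/

import Mathlib

open ExteriorAlgebra

/-- The endomorphism of the `k`-th exterior power induced by an endomorphism. -/
noncomputable def extPow {R M : Type*} [CommRing R] [AddCommGroup M] [Module R M]
    (k : ℕ) (f : M →ₗ[R] M) : Module.End R (⋀[R]^k M) :=
  (ExteriorAlgebra.map f).toLinearMap.restrict (p := ⋀[R]^k M) (q := ⋀[R]^k M) (fun x hx => by
    have mono : ∀ (j : ℕ) (A B : Submodule R (ExteriorAlgebra R M)), A ≤ B → A ^ j ≤ B ^ j := by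
      intro j A B h
      induction j with
      | zero => exact le_rfl
      | succ n ih => rw [pow_succ, pow_succ]; first | exact mul_le_mul' ih h | exact Submodule.mul_le_mul' ih h | exact Submodule.mul_le_mul_left ih |>.trans (Submodule.mul_le_mul_right h)
    have h1 : Submodule.map (ExteriorAlgebra.map f).toLinearMap (⋀[R]^k M) ≤ ⋀[R]^k M := by
      rw [exteriorPower, Submodule.map_pow, ι_range_map_map]
      refine mono _ _ _ ?_
      rintro z hz
      obtain ⟨y, -, rfl⟩ := hz
      exact LinearMap.mem_range_self _ y
    exact h1 ⟨x, hx, rfl⟩)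

section AltSum
open Polynomial Finset

/-- Alternating binomial sum against a polynomial. -/
noncomputable def Tsum (n : ℕ) (P : ℤ[X]) : ℤ :=
  ∑ m ∈ Finset.range (n + 1), (-1 : ℤ) ^ m * (n.choose m : ℤ) * P.eval (m : ℤ)

theorem Tsum_step (n : ℕ) (P : ℤ[X]) :
    Tsum (n + 1) P = Tsum n (P - P.comp (X + 1)) := by
  have hcomp : ∀ i : ℤ, (P.comp (X + 1)).eval i = P.eval (i + 1) := by
    intro i; simp [eval_comp]
  have h2 : ∀ i : ℕ, ((n+1).choose (i+1) : ℤ) = (n.choose i : ℤ) + (n.choose (i+1) : ℤ) := by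
    intro i; exact_mod_cast congrArg (Nat.cast : ℕ → ℤ) (Nat.choose_succ_succ n i)
  have hA : Tsum (n+1) P
      = (∑ i ∈ range (n+1), (-1:ℤ)^(i+1) * ((n+1).choose (i+1) : ℤ) * P.eval ((i:ℤ)+1))
        + P.eval 0 := by
    rw [Tsum, Finset.sum_range_succ']
    push_cast
    norm_num
  have hB : (∑ i ∈ range (n+1), (-1:ℤ)^(i+1) * (n.choose (i+1) : ℤ) * P.eval ((i:ℤ)+1))
      = Tsum n P - P.eval 0 := by
    have h5 := Finset.sum_range_succ' (fun m => (-1:ℤ)^m * (n.choose m : ℤ) * P.eval (m:ℤ)) (n+1)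
    have h4 : (∑ m ∈ range (n+2), (-1:ℤ)^m * (n.choose m : ℤ) * P.eval (m:ℤ)) = Tsum n P := by
      rw [Finset.sum_range_succ, Tsum]
      simp [Nat.choose_succ_self]
    rw [h4] at h5
    simp only [Nat.choose_zero_right, Nat.cast_one, Nat.cast_zero, pow_zero, one_mul, mul_one] at h5
    push_cast at h5 ⊢
    linarith [h5]
  have hC : Tsum n (P.comp (X+1)) = ∑ i ∈ range (n+1), (-1:ℤ)^i * (n.choose i : ℤ) * P.eval ((i:ℤ)+1) := by
    rw [Tsum]; apply Finset.sum_congr rfl; intro i _; rw [hcomp]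
  have hD : Tsum n (P - P.comp (X+1)) = Tsum n P - Tsum n (P.comp (X+1)) := by
    rw [Tsum, Tsum, Tsum, ← Finset.sum_sub_distrib]
    apply Finset.sum_congr rfl; intro i _; rw [eval_sub]; ring
  have hsplit : (∑ i ∈ range (n+1), (-1:ℤ)^(i+1) * ((n+1).choose (i+1) : ℤ) * P.eval ((i:ℤ)+1))
      = (-(∑ i ∈ range (n+1), (-1:ℤ)^i * (n.choose i : ℤ) * P.eval ((i:ℤ)+1)))
        + (∑ i ∈ range (n+1), (-1:ℤ)^(i+1) * (n.choose (i+1) : ℤ) * P.eval ((i:ℤ)+1)) := by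
    rw [← Finset.sum_neg_distrib, ← Finset.sum_add_distrib]
    apply Finset.sum_congr rfl; intro i _; rw [h2]; ring
  rw [hA, hsplit, hB, hD, hC]
  ring

theorem Tsum_eq_zero : ∀ (n : ℕ) (P : ℤ[X]), P.natDegree < n → Tsum n P = 0 := by
  intro n
  induction n with
  | zero => intro P hP; omega
  | succ n ih =>
    intro P hP
    by_cases h0 : P.natDegree = 0
    · obtain ⟨c, rfl⟩ := Polynomial.natDegree_eq_zero.mp h0
      have : Tsum (n+1) (C c) = (∑ m ∈ range (n+2), (-1:ℤ)^m * ((n+1).choose m : ℤ)) * c := by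
        rw [Tsum, Finset.sum_mul]
        apply Finset.sum_congr rfl; intro m _; simp [mul_assoc]
      rw [this, Int.alternating_sum_range_choose_of_ne (by omega), zero_mul]
    · rw [Tsum_step]
      set Q := P - P.comp (X + 1) with hQ
      by_cases hQ0 : Q = 0
      · rw [hQ0]; simp [Tsum]
      · apply ih
        have hPne : P ≠ 0 := fun hc => h0 (by simp [hc])
        have hdX : (X + 1 : ℤ[X]).natDegree = 1 := by
          simpa using Polynomial.natDegree_X_add_C (1:ℤ)
        have hlcX : (X + 1 : ℤ[X]).leadingCoeff = 1 := by
          simpa using Polynomial.leadingCoeff_X_add_C (1:ℤ)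
        have hlc : (P.comp (X + 1)).leadingCoeff = P.leadingCoeff := by
          rw [Polynomial.leadingCoeff_comp (by omega), hlcX, one_pow, mul_one]
        have hcompne : P.comp (X + 1) ≠ 0 := by
          intro hc
          apply hPne
          have := hlc
          rw [hc, Polynomial.leadingCoeff_zero] at this
          exact Polynomial.leadingCoeff_eq_zero.mp this.symm
        have hnd : (P.comp (X + 1)).natDegree = P.natDegree := by
          rw [Polynomial.natDegree_comp, hdX, mul_one]
        have hdeg : P.degree = (P.comp (X + 1)).degree := by
          rw [Polynomial.degree_eq_natDegree hPne, Polynomial.degree_eq_natDegree hcompne, hnd]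
        have hlt : Q.degree < P.degree :=
          Polynomial.degree_sub_lt hdeg hPne hlc.symm
        have : Q.natDegree < P.natDegree :=
          Polynomial.natDegree_lt_natDegree hQ0 hlt
        omega

theorem alt_sum_choose_pow_int (n s : ℕ) (hs : s < n) :
    ∑ m ∈ Finset.range (n + 1), (-1 : ℤ) ^ m * (n.choose m : ℤ) * (m : ℤ) ^ s = 0 := by
  have := Tsum_eq_zero n (X ^ s) (by simpa using hs)
  rw [Tsum] at this
  simpa using this

theorem alt_sum_choose_pow_field {K : Type*} [Field K] [CharZero K] (n s : ℕ) (hs : s < n) :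
    ∑ m ∈ Finset.range (n + 1), (-1 : K) ^ (n - m) * (n.choose m : K) * (m : K) ^ s = 0 := by
  have hZ := alt_sum_choose_pow_int n s hs
  have hcast : ∑ m ∈ Finset.range (n + 1), (-1 : K) ^ m * (n.choose m : K) * (m : K) ^ s = 0 := by
    calc ∑ m ∈ Finset.range (n + 1), (-1 : K) ^ m * (n.choose m : K) * (m : K) ^ s
        = ((∑ m ∈ Finset.range (n + 1), (-1 : ℤ) ^ m * (n.choose m : ℤ) * (m : ℤ) ^ s : ℤ) : K) := by
          push_cast; ring
      _ = 0 := by rw [hZ]; simp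
  calc ∑ m ∈ Finset.range (n + 1), (-1 : K) ^ (n - m) * (n.choose m : K) * (m : K) ^ s
      = (-1 : K) ^ n * ∑ m ∈ Finset.range (n + 1), (-1 : K) ^ m * (n.choose m : K) * (m : K) ^ s := by
        rw [Finset.mul_sum]
        apply Finset.sum_congr rfl
        intro m hm
        have hm' : m ≤ n := Nat.lt_succ_iff.mp (Finset.mem_range.mp hm)
        have hpow : (-1 : K) ^ (n - m) = (-1 : K) ^ n * (-1 : K) ^ m := by
          have hnm : n + m = (n - m) + 2 * m := by omega
          rw [← pow_add, hnm, pow_add, pow_mul]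
          norm_num
        rw [hpow]; ring
    _ = 0 := by rw [hcast, mul_zero]

end AltSum

theorem end_sub_one_pow_expand {R X : Type*} [CommRing R] [AddCommGroup X] [Module R X]
    (A : Module.End R X) (n : ℕ) :
    (A - 1) ^ n = ∑ m ∈ Finset.range (n + 1),
      ((-1 : R) ^ (n - m) * (n.choose m : R)) • A ^ m := by
  have h1 : (A - 1) ^ n = ∑ m ∈ Finset.range (n + 1),
      A ^ m * (-1 : Module.End R X) ^ (n - m) * ((n.choose m : ℕ) : Module.End R X) := by
    rw [sub_eq_add_neg]
    exact Commute.add_pow (Commute.neg_one_right A) n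
  rw [h1]
  apply Finset.sum_congr rfl
  intro m _
  apply LinearMap.ext
  intro w
  simp only [Module.End.mul_apply, LinearMap.smul_apply, Module.End.natCast_apply]
  have hneg : ∀ (i : ℕ) (y : X), ((-1 : Module.End R X) ^ i) y = ((-1 : R) ^ i) • y := by
    intro i y
    have : (-1 : Module.End R X) = (-1 : R) • 1 := by
      apply LinearMap.ext; intro z
      simp
    rw [this, smul_pow, one_pow, LinearMap.smul_apply, Module.End.one_apply]
  rw [hneg, map_smul, LinearMap.map_smul_of_tower, mul_smul]
  congr 1
  rw [Nat.cast_smul_eq_nsmul]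

set_option maxHeartbeats 2000000 in
set_option synthInstance.maxHeartbeats 200000 in
/-- If $(g+1)^2 = 0$ and $k$ is even, then $(Λ^k(g) - 1)^{k+1} = 0$. -/
theorem extPow_sub_one_pow_eq_zero_of_even {K V : Type*} [Field K] [CharZero K]
    [AddCommGroup V] [Module K V] [FiniteDimensional K V]
    (g : Module.End K V) (hgbij : Function.Bijective g)
    (k : ℕ) (hkpos : 0 < k) (hkeven : Even k) (hk' : k < Module.finrank K V)
    (h : (g + 1) ^ 2 = 0) :
    (extPow k g - 1) ^ (k + 1) = 0 := by
  classical
  -- the action of `g + 1` squares to zero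
  have hn2 : ∀ x : V, (g + 1) ((g + 1) x) = 0 := by
    intro x
    rw [← Module.End.mul_apply, ← sq, h]
    rfl
  have hgn : ∀ x : V, g ((g + 1) x) = -((g + 1) x) := by
    intro x
    have h2 := hn2 x
    rw [LinearMap.add_apply, Module.End.one_apply] at h2
    exact eq_neg_of_add_eq_zero_left h2
  -- powers of g
  have hgm : ∀ (m : ℕ) (x : V),
      (g ^ m) x = ((-1 : K) ^ m) • (x - ((m : ℕ) : K) • ((g + 1) x)) := by
    intro m
    induction m with
    | zero => intro x; simp
    | succ m ih =>
      intro x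
      have hstep : (g ^ (m + 1)) x = (g ^ m) (g x) := by
        rw [pow_succ, Module.End.mul_apply]
      rw [hstep, ih (g x)]
      have h1 : (g + 1) (g x) = -((g + 1) x) := by
        have hc : (g + 1) (g x) = g ((g + 1) x) := by
          simp [LinearMap.add_apply, Module.End.one_apply, map_add]
        rw [hc, hgn]
      have h2 : g x = (g + 1) x - x := by
        simp [LinearMap.add_apply, Module.End.one_apply]
      rw [h1, h2]
      push_cast
      rw [pow_succ]
      module
  -- coe of extPow
  have hres : ∀ (f : Module.End K V) (y : ⋀[K]^k V),
      ((extPow k f y : ⋀[K]^k V) : ExteriorAlgebra K V)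
        = ExteriorAlgebra.map f ((y : ExteriorAlgebra K V)) := fun f y => rfl
  -- action of powers of extPow on generators
  have hpow : ∀ (j : ℕ) (v : Fin k → V) (hv : ExteriorAlgebra.ιMulti K k v ∈ ⋀[K]^k V),
      ((((extPow k g) ^ j) ⟨ExteriorAlgebra.ιMulti K k v, hv⟩ : ⋀[K]^k V) : ExteriorAlgebra K V)
        = ExteriorAlgebra.ιMulti K k (fun i => (g ^ j) (v i)) := by
    intro j
    induction j with
    | zero => intro v hv; simp
    | succ j ih =>
      intro v hv
      rw [pow_succ', Module.End.mul_apply, hres, ih, map_apply_ιMulti]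
      congr 1
      funext i
      rw [Function.comp_apply, pow_succ', Module.End.mul_apply]
  -- reduce to generators
  apply LinearMap.ext
  rintro ⟨y, hy⟩
  rw [LinearMap.zero_apply]
  have hy' : y ∈ Submodule.span K (Set.range (ExteriorAlgebra.ιMulti K k (M := V))) := by
    rw [ExteriorAlgebra.ιMulti_span_fixedDegree]; exact hy
  revert hy
  refine Submodule.span_induction ?_ ?_ ?_ ?_ hy'
  · rintro z ⟨v, rfl⟩
    intro hz
    set A := extPow k g with hA
    have hbin := end_sub_one_pow_expand A (k + 1)
    have hexp : ((((A - 1) ^ (k + 1)) ⟨ExteriorAlgebra.ιMulti K k v, hz⟩ : ⋀[K]^k V) : ExteriorAlgebra K V)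
        = ∑ m ∈ Finset.range (k + 2), (((-1 : K) ^ (k + 1 - m)) * ((k + 1).choose m : K)) •
            ExteriorAlgebra.ιMulti K k (fun i => (g ^ m) (v i)) := by
      rw [hbin, LinearMap.sum_apply, AddSubmonoidClass.coe_finset_sum]
      apply Finset.sum_congr rfl
      intro m _
      rw [LinearMap.smul_apply, Submodule.coe_smul, hpow m v hz]
    set u : Fin k → V := fun i => -((g + 1) (v i)) with hu
    have hmulti : ∀ m : ℕ, ExteriorAlgebra.ιMulti K k (fun i => (g ^ m) (v i))
        = ∑ S : Finset (Fin k), ((m : K) ^ S.card) •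
            ExteriorAlgebra.ιMulti K k (S.piecewise u v) := by
      intro m
      set w : Fin k → V := fun i => (v i) - ((m : ℕ) : K) • ((g + 1) (v i)) with hw
      have e1 : (fun i => (g ^ m) (v i)) = fun i => ((-1 : K) ^ m) • w i := by
        funext i; rw [hgm]
      have e2 : ExteriorAlgebra.ιMulti K k (fun i => ((-1 : K) ^ m) • w i)
          = ExteriorAlgebra.ιMulti K k w := by
        have h2 := MultilinearMap.map_smul_univ
          (ExteriorAlgebra.ιMulti K k (M := V)).toMultilinearMap
          (fun _ : Fin k => (-1 : K) ^ m) w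
        simp only [AlternatingMap.coe_multilinearMap] at h2
        rw [h2, Finset.prod_const, Finset.card_univ, Fintype.card_fin]
        have : ((-1 : K) ^ m) ^ k = 1 := by
          rw [← pow_mul, mul_comm, pow_mul, hkeven.neg_one_pow, one_pow]
        rw [this, one_smul]
      have e3 : w = (fun i => ((m : ℕ) : K) • u i) + v := by
        funext i
        simp only [hw, hu, Pi.add_apply, smul_neg]
        abel
      have e4 := MultilinearMap.map_add_univ
        (ExteriorAlgebra.ιMulti K k (M := V)).toMultilinearMap
        (fun i => ((m : ℕ) : K) • u i) v
      simp only [AlternatingMap.coe_multilinearMap] at e4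
      have e5 : ∀ S : Finset (Fin k),
          (ExteriorAlgebra.ιMulti K k (M := V)) (S.piecewise (fun i => ((m : ℕ) : K) • u i) v)
            = ((m : K) ^ S.card) • ExteriorAlgebra.ιMulti K k (S.piecewise u v) := by
        intro S
        have hpw : S.piecewise (fun i => ((m : ℕ) : K) • u i) v
            = S.piecewise (fun i => ((m : ℕ) : K) • (S.piecewise u v) i) (S.piecewise u v) := by
          funext i
          by_cases hi : i ∈ S <;> simp [Finset.piecewise, hi]
        rw [hpw]
        have h5 := MultilinearMap.map_piecewise_smul
          (ExteriorAlgebra.ιMulti K k (M := V)).toMultilinearMap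
          (fun _ : Fin k => (m : K)) (S.piecewise u v) S
        simp only [AlternatingMap.coe_multilinearMap] at h5
        rw [h5, Finset.prod_const]
      rw [e1, e2, e3, e4]
      apply Finset.sum_congr rfl
      intro S _
      exact e5 S
    rw [← ZeroMemClass.coe_eq_zero, hexp]
    simp_rw [hmulti, Finset.smul_sum, smul_smul]
    rw [Finset.sum_comm]
    apply Finset.sum_eq_zero
    intro S _
    have hcard : S.card < k + 1 := by
      have := Finset.card_le_univ S
      simp only [Finset.card_univ, Fintype.card_fin] at this
      omega
    have hzero := alt_sum_choose_pow_field (K := K) (k + 1) S.card hcard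
    rw [← Finset.sum_smul]
    have : (∑ m ∈ Finset.range (k + 2),
        (-1 : K) ^ (k + 1 - m) * ((k + 1).choose m : K) * (m : K) ^ S.card) = 0 := by
      simpa using hzero
    rw [this, zero_smul]
  · intro h0
    exact map_zero _
  · intro a b ha hb iha ihb hab
    have ham : a ∈ ⋀[K]^k V := by rw [← ExteriorAlgebra.ιMulti_span_fixedDegree]; exact ha
    have hbm : b ∈ ⋀[K]^k V := by rw [← ExteriorAlgebra.ιMulti_span_fixedDegree]; exact hb
    have : (⟨a + b, hab⟩ : ⋀[K]^k V) = ⟨a, ham⟩ + ⟨b, hbm⟩ := rfl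
    rw [this, map_add, iha ham, ihb hbm, add_zero]
  · intro c a ha iha hca
    have ham : a ∈ ⋀[K]^k V := by rw [← ExteriorAlgebra.ιMulti_span_fixedDegree]; exact ha
    have : (⟨c • a, hca⟩ : ⋀[K]^k V) = c • ⟨a, ham⟩ := rfl
    rw [this, map_smul, iha ham, smul_zero]
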